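/- Let γ ∈ ℝ, let r1 > 0, and let g : [r1, ∞) → ℂ be continuously differentiable such that r ↦ r^{−1−γ}·|g(r)|² and r ↦ r^{1+γ}·|g′(r)|² are Lebesgue integrable on [r1, ∞). Then for every r2 ≥ r1, |g(r2)|² ≤ |g(r1)|² + 2·(∫_{r1}^∞ r^{−1−γ}·|g(r)|² dr)^{1/2}·(∫_{r1}^∞ r^{1+γ}·|g′(r)|² dr)^{1/2}. -/

import Mathlib

open MeasureTheory Set

/-- Radial trace/interpolation estimate underlying the Sobolev estimate on hyperboloids. -/
theorem radial_trace_estimate (γ r1 : ℝ) (hr1 : 0 < r1) (g g' : ℝ → ℂ)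
    (hderiv : ∀ r ∈ Set.Ici r1, HasDerivWithinAt g (g' r) (Set.Ici r1) r)
    (hcont : ContinuousOn g' (Set.Ici r1))
    (hint1 : IntegrableOn (fun r => r ^ (-1 - γ) * ‖g r‖ ^ 2) (Set.Ici r1))
    (hint2 : IntegrableOn (fun r => r ^ (1 + γ) * ‖g' r‖ ^ 2) (Set.Ici r1)) :
    ∀ r2, r1 ≤ r2 →
      ‖g r2‖ ^ 2 ≤ ‖g r1‖ ^ 2 +
        2 * (∫ r in Set.Ici r1, r ^ (-1 - γ) * ‖g r‖ ^ 2) ^ (1 / 2 : ℝ) *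
          (∫ r in Set.Ici r1, r ^ (1 + γ) * ‖g' r‖ ^ 2) ^ (1 / 2 : ℝ) := by
  intro r2 hr2
  have hs : MeasurableSet (Set.Ici r1) := measurableSet_Ici
  have hgc : ContinuousOn g (Set.Ici r1) := fun r hr => (hderiv r hr).continuousWithinAt
  have hpos : ∀ r ∈ Set.Ici r1, (0:ℝ) < r := fun r hr => lt_of_lt_of_le hr1 hr
  -- the weight functions
  set u : ℝ → ℝ := fun r => r ^ ((-1 - γ) / 2) * ‖g r‖ with hu
  set v : ℝ → ℝ := fun r => r ^ ((1 + γ) / 2) * ‖g' r‖ with hv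
  have hu_nonneg : ∀ r ∈ Set.Ici r1, 0 ≤ u r := fun r hr =>
    mul_nonneg (Real.rpow_nonneg (hpos r hr).le _) (norm_nonneg _)
  have hv_nonneg : ∀ r ∈ Set.Ici r1, 0 ≤ v r := fun r hr =>
    mul_nonneg (Real.rpow_nonneg (hpos r hr).le _) (norm_nonneg _)
  -- pointwise identities on `Ici r1`
  have hu_sq : ∀ r ∈ Set.Ici r1, u r ^ 2 = r ^ (-1 - γ) * ‖g r‖ ^ 2 := by
    intro r hr
    have h0 : (0:ℝ) < r := hpos r hr
    have : (r ^ ((-1 - γ) / 2)) ^ 2 = r ^ (-1 - γ) := by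
      rw [← Real.rpow_natCast (r ^ ((-1 - γ) / 2)) 2, ← Real.rpow_mul h0.le]
      norm_num
    simp only [hu, mul_pow, this]
  have hv_sq : ∀ r ∈ Set.Ici r1, v r ^ 2 = r ^ (1 + γ) * ‖g' r‖ ^ 2 := by
    intro r hr
    have h0 : (0:ℝ) < r := hpos r hr
    have : (r ^ ((1 + γ) / 2)) ^ 2 = r ^ (1 + γ) := by
      rw [← Real.rpow_natCast (r ^ ((1 + γ) / 2)) 2, ← Real.rpow_mul h0.le]
      norm_num
    simp only [hv, mul_pow, this]
  have huv : ∀ r ∈ Set.Ici r1, u r * v r = ‖g r‖ * ‖g' r‖ := by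
    intro r hr
    have h0 : (0:ℝ) < r := hpos r hr
    have : r ^ ((-1 - γ) / 2) * r ^ ((1 + γ) / 2) = 1 := by
      rw [← Real.rpow_add h0, show (-1 - γ) / 2 + (1 + γ) / 2 = 0 by ring, Real.rpow_zero]
    calc u r * v r = (r ^ ((-1 - γ) / 2) * r ^ ((1 + γ) / 2)) * (‖g r‖ * ‖g' r‖) := by
          simp only [hu, hv]; ring
      _ = ‖g r‖ * ‖g' r‖ := by rw [this, one_mul]
  -- continuity of u and v on `Ici r1`
  have hrpow_cont : ∀ c : ℝ, ContinuousOn (fun r : ℝ => r ^ c) (Set.Ici r1) := by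
    intro c
    exact ContinuousOn.rpow_const continuousOn_id (fun r hr => Or.inl (hpos r hr).ne')
  have hu_cont : ContinuousOn u (Set.Ici r1) := (hrpow_cont _).mul hgc.norm
  have hv_cont : ContinuousOn v (Set.Ici r1) := (hrpow_cont _).mul hcont.norm
  -- measurability
  have hu_meas : AEStronglyMeasurable u (volume.restrict (Set.Ici r1)) :=
    hu_cont.aestronglyMeasurable hs
  have hv_meas : AEStronglyMeasurable v (volume.restrict (Set.Ici r1)) :=
    hv_cont.aestronglyMeasurable hs
  -- integrability of squares
  have hu2_int : Integrable (fun r => u r ^ 2) (volume.restrict (Set.Ici r1)) := by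
    refine hint1.congr ?_
    filter_upwards [ae_restrict_mem hs] with r hr
    exact (hu_sq r hr).symm
  have hv2_int : Integrable (fun r => v r ^ 2) (volume.restrict (Set.Ici r1)) := by
    refine hint2.congr ?_
    filter_upwards [ae_restrict_mem hs] with r hr
    exact (hv_sq r hr).symm
  have hu_mem : MemLp u 2 (volume.restrict (Set.Ici r1)) :=
    (memLp_two_iff_integrable_sq hu_meas).2 hu2_int
  have hv_mem : MemLp v 2 (volume.restrict (Set.Ici r1)) :=
    (memLp_two_iff_integrable_sq hv_meas).2 hv2_int
  -- integrability of the product u*v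
  have huv_int : Integrable (fun r => u r * v r) (volume.restrict (Set.Ici r1)) := by
    refine Integrable.mono' ((hu2_int.add hv2_int).div_const 2) (hu_meas.mul hv_meas) ?_
    filter_upwards [ae_restrict_mem hs] with r hr
    have h1 : 2 * (u r * v r) ≤ u r ^ 2 + v r ^ 2 := by nlinarith [sq_nonneg (u r - v r)]
    have h2 : 0 ≤ u r * v r := mul_nonneg (hu_nonneg r hr) (hv_nonneg r hr)
    rw [Real.norm_of_nonneg h2]
    show u r * v r ≤ (u r ^ 2 + v r ^ 2) / 2
    linarith
  -- Cauchy–Schwarz (Hölder with p = q = 2)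
  have hpq : (2:ℝ).HolderConjugate 2 := Real.HolderConjugate.two_two
  have h2 : ENNReal.ofReal (2:ℝ) = 2 := by norm_num
  have holder :
      ∫ r in Set.Ici r1, u r * v r ≤
        (∫ r in Set.Ici r1, u r ^ (2:ℝ)) ^ (1 / 2 : ℝ) *
          (∫ r in Set.Ici r1, v r ^ (2:ℝ)) ^ (1 / 2 : ℝ) := by
    refine integral_mul_le_Lp_mul_Lq_of_nonneg hpq ?_ ?_ (h2 ▸ hu_mem) (h2 ▸ hv_mem)
    · filter_upwards [ae_restrict_mem hs] with r hr using hu_nonneg r hr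
    · filter_upwards [ae_restrict_mem hs] with r hr using hv_nonneg r hr
  have hrpow_pow : ∀ x : ℝ, x ^ (2:ℝ) = x ^ 2 := by
    intro x
    rw [show (2:ℝ) = ((2:ℕ):ℝ) by norm_num, Real.rpow_natCast]
  have hAeq : ∫ r in Set.Ici r1, u r ^ (2:ℝ) = ∫ r in Set.Ici r1, r ^ (-1 - γ) * ‖g r‖ ^ 2 := by
    refine setIntegral_congr_fun hs fun r hr => ?_
    rw [hrpow_pow]; exact hu_sq r hr
  have hBeq : ∫ r in Set.Ici r1, v r ^ (2:ℝ) = ∫ r in Set.Ici r1, r ^ (1 + γ) * ‖g' r‖ ^ 2 := by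
    refine setIntegral_congr_fun hs fun r hr => ?_
    rw [hrpow_pow]; exact hv_sq r hr
  -- Fundamental theorem of calculus for ‖g‖²
  set D : ℝ → ℝ := fun r => 2 * (inner ℝ (g r) (g' r) : ℝ) with hD
  have hIccsub : Set.Icc r1 r2 ⊆ Set.Ici r1 := Set.Icc_subset_Ici_self
  have hD_cont : ContinuousOn D (Set.Icc r1 r2) :=
    continuousOn_const.mul ((hgc.mono hIccsub).inner (hcont.mono hIccsub))
  have hD_intI : IntervalIntegrable D volume r1 r2 := by
    refine ContinuousOn.intervalIntegrable ?_
    rwa [Set.uIcc_of_le hr2]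
  have ftc : ∫ r in r1..r2, D r = ‖g r2‖ ^ 2 - ‖g r1‖ ^ 2 := by
    refine intervalIntegral.integral_eq_sub_of_hasDeriv_right_of_le hr2
      ((hgc.mono hIccsub).norm.pow 2) ?_ hD_intI
    intro x hx
    have hx1 : r1 < x := hx.1
    have hmem : Set.Ici r1 ∈ nhds x := Ici_mem_nhds hx1
    have hdx : HasDerivAt g (g' x) x :=
      (hderiv x (Set.mem_Ici.2 hx1.le)).hasDerivAt hmem
    exact hdx.norm_sq.hasDerivWithinAt
  -- bound the derivative pointwise
  have hD_le : ∀ r ∈ Set.Icc r1 r2, D r ≤ 2 * (u r * v r) := by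
    intro r hr
    have := abs_real_inner_le_norm (g r) (g' r)
    have h1 : (inner ℝ (g r) (g' r) : ℝ) ≤ ‖g r‖ * ‖g' r‖ := (abs_le.1 this).2
    rw [huv r (hIccsub hr)]
    simp only [hD]
    linarith
  -- integral comparison on [r1, r2]
  have huv_contI : ContinuousOn (fun r => 2 * (u r * v r)) (Set.Icc r1 r2) :=
    continuousOn_const.mul ((hu_cont.mono hIccsub).mul (hv_cont.mono hIccsub))
  have huv_intI : IntervalIntegrable (fun r => 2 * (u r * v r)) volume r1 r2 := by
    refine ContinuousOn.intervalIntegrable ?_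
    rwa [Set.uIcc_of_le hr2]
  have step1 : ∫ r in r1..r2, D r ≤ ∫ r in r1..r2, 2 * (u r * v r) := by
    refine intervalIntegral.integral_mono_on hr2 hD_intI huv_intI ?_
    exact hD_le
  -- extend the integral to all of Ici r1
  have step2 : ∫ r in r1..r2, 2 * (u r * v r) ≤ 2 * ∫ r in Set.Ici r1, u r * v r := by
    rw [intervalIntegral.integral_const_mul]
    have hsub : Set.Ioc r1 r2 ⊆ Set.Ici r1 := fun x hx => le_of_lt hx.1
    have hmono : ∫ r in Set.Ioc r1 r2, u r * v r ≤ ∫ r in Set.Ici r1, u r * v r := by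
      refine setIntegral_mono_set huv_int ?_ (HasSubset.Subset.eventuallyLE hsub)
      filter_upwards [ae_restrict_mem hs] with r hr
      exact mul_nonneg (hu_nonneg r hr) (hv_nonneg r hr)
    rw [intervalIntegral.integral_of_le hr2]
    linarith
  -- combine everything
  have cs : ∫ r in Set.Ici r1, u r * v r ≤
      (∫ r in Set.Ici r1, r ^ (-1 - γ) * ‖g r‖ ^ 2) ^ (1 / 2 : ℝ) *
        (∫ r in Set.Ici r1, r ^ (1 + γ) * ‖g' r‖ ^ 2) ^ (1 / 2 : ℝ) := by
    rw [← hAeq, ← hBeq]; exact holder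
  have : ‖g r2‖ ^ 2 - ‖g r1‖ ^ 2 ≤
      2 * ((∫ r in Set.Ici r1, r ^ (-1 - γ) * ‖g r‖ ^ 2) ^ (1 / 2 : ℝ) *
        (∫ r in Set.Ici r1, r ^ (1 + γ) * ‖g' r‖ ^ 2) ^ (1 / 2 : ℝ)) := by
    rw [← ftc]
    calc ∫ r in r1..r2, D r ≤ 2 * ∫ r in Set.Ici r1, u r * v r := le_trans step1 step2
      _ ≤ _ := by
          have := cs
          linarith
  linarith
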